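/- arXiv:1807.07045 — 4 statements merged into one kernel-verified Lean document; each statement's English description precedes it below -/
import Mathlib

section
/- Let k₀ be a field of characteristic ≠ 2 and b, c ∈ k₀ˣ with b not a square in k₀. Then c lies in the intersection of k₀ˣ with the product set D(⟨1,−(b+1)⟩ over k₀(√b)) · D(⟨1,−(b+c²)⟩ over k₀(√b)), i.e., c = αβ where α is represented by ⟨1,−(b+1)⟩ and β by ⟨1,−(b+c²)⟩ over k₀(√b). -/
open scoped BigOperators

/-- The diagonal quadratic form with weights `w`, as a function on `ι → K`. -/
def diagQF {K : Type} [Field K] {ι : Type} [Fintype ι] (w : ι → K) : (ι → K) → K :=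
  fun v => ∑ i, w i * v i ^ 2

/-- `c` is a value represented by the diagonal quadratic form with weights `w`. -/
def RepresentsQF {K : Type} [Field K] {ι : Type} [Fintype ι] (w : ι → K) (c : K) : Prop :=
  ∃ v, diagQF w v = c

/-- Isometry (isomorphism) of diagonal quadratic forms. -/
def QFEquiv (K : Type) [Field K] {ι κ : Type} [Fintype ι] [Fintype κ]
    (w : ι → K) (w' : κ → K) : Prop :=
  ∃ e : (ι → K) ≃ₗ[K] (κ → K), ∀ v, diagQF w' (e v) = diagQF w v

/-- Scaling a diagonal quadratic form by `c` : the form `⟨c⟩·q`. -/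
def smulW {K : Type} [Field K] {ι : Type} (c : K) (w : ι → K) : ι → K := fun i => c * w i

/-- Tensor product of diagonal quadratic forms. -/
def tensorW {K : Type} [Field K] {ι κ : Type} (w₁ : ι → K) (w₂ : κ → K) : ι × κ → K :=
  fun p => w₁ p.1 * w₂ p.2

/-- The 1-fold Pfister form `⟨⟨a⟩⟩ = ⟨1, -a⟩`. -/
def pf1 {K : Type} [Field K] (a : K) : Fin 2 → K := ![1, -a]

/-- The 2-fold Pfister form `⟨⟨a, d⟩⟩ = ⟨1,-a⟩ ⊗ ⟨1,-d⟩`. -/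
def pf2 {K : Type} [Field K] (a d : K) : Fin 2 × Fin 2 → K := tensorW (pf1 a) (pf1 d)

/-- The n-fold Pfister form `⟨⟨a 0, …, a (n-1)⟩⟩`. -/
def pfW {K : Type} [Field K] {n : ℕ} (a : Fin n → K) : (Fin n → Fin 2) → K :=
  fun f => ∏ i, if f i = 0 then 1 else -a i

/-- Orthogonal sum of diagonal quadratic forms. -/
def orthW {K : Type} [Field K] {ι κ : Type} (w₁ : ι → K) (w₂ : κ → K) : ι ⊕ κ → K :=
  Sum.elim w₁ w₂

/-- The weights of an orthogonal sum of `m` hyperbolic planes. -/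
def hypW (K : Type) [Field K] (m : ℕ) : Fin m ⊕ Fin m → K :=
  Sum.elim (fun _ => 1) (fun _ => -1)

/-- Witt equivalence of diagonal quadratic forms: they become isometric after
adding hyperbolic planes. -/
def WittEquiv (K : Type) [Field K] {ι κ : Type} [Fintype ι] [Fintype κ]
    (w : ι → K) (w' : κ → K) : Prop :=
  ∃ m m' : ℕ, QFEquiv K (orthW w (hypW K m)) (orthW w' (hypW K m'))

/-- A diagonal quadratic form is anisotropic. -/
def AnisotropicQF {K : Type} [Field K] {ι : Type} [Fintype ι] (w : ι → K) : Prop :=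
  ∀ v, diagQF w v = 0 → v = 0

/-- Base change of a diagonal quadratic form along a field extension. -/
def bcW {k K : Type} [Field k] [Field K] [Algebra k K] {ι : Type} (w : ι → k) : ι → K :=
  fun i => algebraMap k K (w i)


/-- `c` lies in `k₀ˣ ∩ (D_{k₀(√b)}(⟨1,−(b+1)⟩) · D_{k₀(√b)}(⟨1,−(b+c²)⟩))`:
`c = α·β` where `α` is a nonzero value of `⟨1,−(b+1)⟩` and `β` a nonzero value of
`⟨1,−(b+c²)⟩` over `k₀(√b)`. -/
theorem stmt_2 {k₀ K : Type} [Field k₀] [Field K] [Algebra k₀ K]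
    (hchar : (2 : k₀) ≠ 0) (b c : k₀) (hb : b ≠ 0) (hc : c ≠ 0)
    (hbns : ¬∃ x : k₀, x ^ 2 = b)
    (s : K) (hs : s ^ 2 = algebraMap k₀ K b) :
    ∃ α β : K, α ≠ 0 ∧ β ≠ 0 ∧
      RepresentsQF (pf1 (algebraMap k₀ K (b + 1))) α ∧
      RepresentsQF (pf1 (algebraMap k₀ K (b + c ^ 2))) β ∧
      algebraMap k₀ K c = α * β := by
  have h2 : (2 : K) ≠ 0 := by
    rw [show (2 : K) = algebraMap k₀ K 2 from (map_ofNat _ 2).symm]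
    exact (map_ne_zero _).mpr hchar
  have hs0 : s ≠ 0 := by
    intro h
    apply hb
    have : algebraMap k₀ K b = 0 := by rw [← hs, h]; ring
    exact (map_eq_zero _).mp this
  have hc' : algebraMap k₀ K c ≠ 0 := (map_ne_zero _).mpr hc
  refine ⟨(2 * s)⁻¹, 2 * algebraMap k₀ K c * s, ?_, ?_, ?_, ?_, ?_⟩
  · exact inv_ne_zero (mul_ne_zero h2 hs0)
  · exact mul_ne_zero (mul_ne_zero h2 hc') hs0
  · refine ⟨![(s + 1) / (2 * s), (2 * s)⁻¹], ?_⟩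
    simp only [diagQF, pf1, Fin.sum_univ_two, Matrix.cons_val_zero, Matrix.cons_val_one,
      Matrix.head_cons, map_add, map_one, ← hs]
    field_simp
    ring
  · refine ⟨![s + algebraMap k₀ K c, 1], ?_⟩
    simp only [diagQF, pf1, Fin.sum_univ_two, Matrix.cons_val_zero, Matrix.cons_val_one,
      Matrix.head_cons, map_add, map_pow, ← hs]
    ring
  · field_simp
end

section
/- Let q be an n-fold Pfister quadratic form over a field K of characteristic ≠ 2, and let λ ∈ Kˣ be a nonzero value represented by q. Then ⟨λ⟩·q ≅ q, i.e., every represented nonzero value of a Pfister form is a similarity factor of it. -/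
open scoped BigOperators

section Lemmas
variable {K : Type} [Field K] {ι κ ι₁ ι₂ κ₁ κ₂ : Type} [Fintype ι] [Fintype κ]
  [Fintype ι₁] [Fintype ι₂] [Fintype κ₁] [Fintype κ₂]

theorem qfe_refl (w : ι → K) : QFEquiv K w w := ⟨LinearEquiv.refl K _, fun _ => rfl⟩

theorem qfe_symm {w : ι → K} {w' : κ → K} (h : QFEquiv K w w') : QFEquiv K w' w := by
  obtain ⟨e, he⟩ := h
  exact ⟨e.symm, fun v => by rw [← he (e.symm v), e.apply_symm_apply]⟩

theorem qfe_trans {w : ι → K} {w' : κ → K} {w'' : κ₁ → K}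
    (h : QFEquiv K w w') (h' : QFEquiv K w' w'') : QFEquiv K w w'' := by
  obtain ⟨e, he⟩ := h; obtain ⟨e', he'⟩ := h'
  exact ⟨e.trans e', fun v => by simpa using (he' (e v)).trans (he v)⟩

theorem diag_smul (c : K) (w : ι → K) (v : ι → K) :
    diagQF (smulW c w) v = c * diagQF w v := by
  simp [diagQF, smulW, Finset.mul_sum, mul_assoc]

theorem qfe_smul (c : K) {w : ι → K} {w' : κ → K} (h : QFEquiv K w w') :
    QFEquiv K (smulW c w) (smulW c w') := by
  obtain ⟨e, he⟩ := h
  exact ⟨e, fun v => by rw [diag_smul, diag_smul, he]⟩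

theorem smul_smulW (c d : K) (w : ι → K) : smulW c (smulW d w) = smulW (c * d) w := by
  funext i; simp [smulW, mul_assoc]

theorem smul_one_W (w : ι → K) : smulW (1 : K) w = w := by
  funext i; simp [smulW]

theorem smul_orthW (c : K) (w₁ : ι → K) (w₂ : κ → K) :
    smulW c (orthW w₁ w₂) = orthW (smulW c w₁) (smulW c w₂) := by
  funext s; cases s <;> rfl

theorem qfe_sq {d : K} (hd : d ≠ 0) (w : ι → K) : QFEquiv K (smulW (d ^ 2) w) w := by
  refine ⟨LinearEquiv.smulOfNeZero K _ d hd, fun v => ?_⟩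
  rw [diag_smul]
  simp only [diagQF, Finset.mul_sum]
  refine Finset.sum_congr rfl fun i _ => ?_
  show w i * (d * v i) ^ 2 = d ^ 2 * (w i * v i ^ 2)
  ring

theorem qfe_reindex {w : ι → K} {w' : κ → K} (σ : ι ≃ κ) (hw : ∀ i, w i = w' (σ i)) :
    QFEquiv K w w' := by
  refine ⟨LinearEquiv.funCongrLeft K K σ.symm, fun v => ?_⟩
  show (∑ j, w' j * (v (σ.symm j)) ^ 2) = _
  rw [← Equiv.sum_comp σ (fun j => w' j * (v (σ.symm j)) ^ 2)]
  simp [diagQF, hw]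

theorem diag_orth (w₁ : ι → K) (w₂ : κ → K) (v : ι ⊕ κ → K) :
    diagQF (orthW w₁ w₂) v
      = diagQF w₁ (v ∘ Sum.inl) + diagQF w₂ (v ∘ Sum.inr) := by
  simp [diagQF, orthW, Fintype.sum_sum_type]

theorem qfe_orth {w₁ : ι₁ → K} {w₁' : κ₁ → K} {w₂ : ι₂ → K} {w₂' : κ₂ → K}
    (h₁ : QFEquiv K w₁ w₁') (h₂ : QFEquiv K w₂ w₂') :
    QFEquiv K (orthW w₁ w₂) (orthW w₁' w₂') := by
  obtain ⟨e₁, he₁⟩ := h₁; obtain ⟨e₂, he₂⟩ := h₂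
  refine ⟨(LinearEquiv.sumArrowLequivProdArrow ι₁ ι₂ K K).trans
    ((e₁.prodCongr e₂).trans (LinearEquiv.sumArrowLequivProdArrow κ₁ κ₂ K K).symm),
    fun v => ?_⟩
  set u := ((LinearEquiv.sumArrowLequivProdArrow ι₁ ι₂ K K).trans
    ((e₁.prodCongr e₂).trans (LinearEquiv.sumArrowLequivProdArrow κ₁ κ₂ K K).symm)) v
    with hu
  have h1 : u ∘ Sum.inl = e₁ (v ∘ Sum.inl) := by
    funext j
    simp only [hu, Function.comp_apply, LinearEquiv.trans_apply,
      LinearEquiv.sumArrowLequivProdArrow_symm_apply_inl, LinearEquiv.prodCongr_apply]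
    have : ((LinearEquiv.sumArrowLequivProdArrow ι₁ ι₂ K K) v).1 = v ∘ Sum.inl :=
      funext fun i => LinearEquiv.sumArrowLequivProdArrow_apply_fst v i
    rw [this]
  have h2 : u ∘ Sum.inr = e₂ (v ∘ Sum.inr) := by
    funext j
    simp only [hu, Function.comp_apply, LinearEquiv.trans_apply,
      LinearEquiv.sumArrowLequivProdArrow_symm_apply_inr, LinearEquiv.prodCongr_apply]
    have : ((LinearEquiv.sumArrowLequivProdArrow ι₁ ι₂ K K) v).2 = v ∘ Sum.inr :=
      funext fun i => LinearEquiv.sumArrowLequivProdArrow_apply_snd v i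
    rw [this]
  rw [diag_orth, diag_orth, h1, h2, he₁, he₂]

theorem orth_comm (w₁ : ι → K) (w₂ : κ → K) :
    QFEquiv K (orthW w₁ w₂) (orthW w₂ w₁) := by
  refine qfe_reindex (Equiv.sumComm ι κ) fun i => ?_
  cases i <;> rfl

set_option maxHeartbeats 1000000 in
/-- key binary lemma -/
theorem qfe_binary {x y : K} (hx : x ≠ 0) (hy : y ≠ 0) (hc : x + y ≠ 0) (q : κ → K) :
    QFEquiv K (orthW (smulW x q) (smulW y q))
      (orthW (smulW (x + y) q) (smulW (x * y * (x + y)) q)) := by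
  apply qfe_symm
  set c := x + y with hcdef
  let F : ((κ ⊕ κ) → K) →ₗ[K] ((κ ⊕ κ) → K) :=
    { toFun := fun v => Sum.elim (fun j => v (Sum.inl j) + y * v (Sum.inr j))
        (fun j => v (Sum.inl j) - x * v (Sum.inr j))
      map_add' := by
        intro v w; funext s
        cases s <;> simp only [Sum.elim_inl, Sum.elim_inr, Pi.add_apply] <;> ring
      map_smul' := by
        intro t v; funext s
        cases s <;> simp only [Sum.elim_inl, Sum.elim_inr, Pi.smul_apply, smul_eq_mul,
          RingHom.id_apply] <;> ring }
  let G : ((κ ⊕ κ) → K) →ₗ[K] ((κ ⊕ κ) → K) :=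
    { toFun := fun u => Sum.elim (fun j => (x * u (Sum.inl j) + y * u (Sum.inr j)) / c)
        (fun j => (u (Sum.inl j) - u (Sum.inr j)) / c)
      map_add' := by
        intro v w; funext s
        cases s <;> simp only [Sum.elim_inl, Sum.elim_inr, Pi.add_apply] <;> ring
      map_smul' := by
        intro t v; funext s
        cases s <;> simp only [Sum.elim_inl, Sum.elim_inr, Pi.smul_apply, smul_eq_mul,
          RingHom.id_apply] <;> ring }
  have hFG : F.comp G = LinearMap.id := by
    apply LinearMap.ext; intro u; funext s
    cases s <;> simp only [F, G, LinearMap.comp_apply, LinearMap.coe_mk, AddHom.coe_mk,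
      Sum.elim_inl, Sum.elim_inr, LinearMap.id_apply] <;> field_simp <;> ring
  have hGF : G.comp F = LinearMap.id := by
    apply LinearMap.ext; intro u; funext s
    cases s <;> simp only [F, G, LinearMap.comp_apply, LinearMap.coe_mk, AddHom.coe_mk,
      Sum.elim_inl, Sum.elim_inr, LinearMap.id_apply] <;> field_simp <;> ring
  refine ⟨LinearEquiv.ofLinear F G hFG hGF, fun v => ?_⟩
  rw [diag_orth, diag_orth]
  simp only [LinearEquiv.ofLinear_apply, F, LinearMap.coe_mk, AddHom.coe_mk]
  rw [diag_smul, diag_smul, diag_smul, diag_smul]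
  simp only [diagQF, Function.comp_apply, Sum.elim_inl, Sum.elim_inr, Finset.mul_sum]
  rw [← Finset.sum_add_distrib, ← Finset.sum_add_distrib]
  refine Finset.sum_congr rfl fun j _ => ?_
  ring

theorem qfe_represents {w : ι → K} {w' : κ → K} (h : QFEquiv K w w') {c : K}
    (hr : RepresentsQF w c) : RepresentsQF w' c := by
  obtain ⟨e, he⟩ := h; obtain ⟨v, hv⟩ := hr
  exact ⟨e v, by rw [he, hv]⟩

end Lemmas

section Pfister
variable {K : Type} [Field K]

/-- decomposition of (n+1)-fold Pfister form -/
theorem pf_decomp {n : ℕ} (a : Fin (n + 1) → K) :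
    QFEquiv K (pfW a)
      (orthW (pfW (a ∘ Fin.castSucc)) (smulW (-a (Fin.last n)) (pfW (a ∘ Fin.castSucc)))) := by
  refine qfe_reindex
    ⟨fun f => if f (Fin.last n) = 0 then Sum.inl (f ∘ Fin.castSucc) else Sum.inr (f ∘ Fin.castSucc),
     Sum.elim (fun g => Fin.snoc g 0) (fun g => Fin.snoc g 1),
     ?_, ?_⟩ ?_
  · intro f
    by_cases h : f (Fin.last n) = 0
    · simp only [h, if_pos]
      show Fin.snoc (Fin.init f) 0 = f
      rw [← h]; exact Fin.snoc_init_self f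
    · simp only [h, if_neg, Sum.elim_inr]
      have : f (Fin.last n) = 1 := by omega
      show Fin.snoc (Fin.init f) 1 = f
      rw [← this]; exact Fin.snoc_init_self f
  · intro s
    cases s with
    | inl g => simp [Fin.snoc_last, Fin.init_snoc]
    | inr g => simp [Fin.snoc_last, Fin.init_snoc]
  · intro f
    simp only [Equiv.coe_fn_mk]
    have hprod : pfW a f
        = (∏ i : Fin n, if f (Fin.castSucc i) = 0 then 1 else -a (Fin.castSucc i))
          * (if f (Fin.last n) = 0 then 1 else -a (Fin.last n)) := by
      simp [pfW, Fin.prod_univ_castSucc]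
    by_cases h : f (Fin.last n) = 0
    · simp only [h, if_pos]
      show pfW a f = pfW (a ∘ Fin.castSucc) (f ∘ Fin.castSucc)
      rw [hprod]; simp [h, pfW, Function.comp]
    · simp only [h, if_neg]
      show pfW a f = smulW (-a (Fin.last n)) (pfW (a ∘ Fin.castSucc)) (f ∘ Fin.castSucc)
      rw [hprod]; simp [h, pfW, smulW, Function.comp]; ring

end Pfister


/-- a Pfister form is round: every nonzero represented value `c` of an
n-fold Pfister form `q` is a similarity factor, i.e. `⟨c⟩·q ≅ q`. -/
theorem stmt_5 {K : Type} [Field K] (hchar : (2 : K) ≠ 0)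
    {n : ℕ} (a : Fin n → K) (ha : ∀ i, a i ≠ 0)
    (c : K) (hc : c ≠ 0) (hrep : RepresentsQF (pfW a) c) :
    QFEquiv K (smulW c (pfW a)) (pfW a) := by
  clear hchar
  revert a ha c hc hrep
  induction n with
  | zero =>
    intro a ha c hc hrep
    obtain ⟨v, hv⟩ := hrep
    have h1 : c = v default ^ 2 := by
      rw [← hv]
      simp [diagQF, pfW, Fintype.sum_unique]
      exact congrArg (· ^ 2) (congrArg v (Subsingleton.elim _ _))
    have hd : v default ≠ 0 := fun h => hc (by rw [h1, h]; ring)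
    rw [h1]
    exact qfe_sq hd (pfW a)
  | succ n IH =>
    intro a ha c hc hrep
    have haN : a (Fin.last n) ≠ 0 := ha _
    have ha' : ∀ i, (a ∘ Fin.castSucc) i ≠ 0 := fun i => ha _
    have hdec := pf_decomp a
    obtain ⟨u, hu⟩ := qfe_represents hdec hrep
    rw [diag_orth, diag_smul] at hu
    set aN := a (Fin.last n) with haNdef
    set q : (Fin n → Fin 2) → K := pfW (a ∘ Fin.castSucc) with hq
    set x := diagQF q (u ∘ Sum.inl) with hxdef
    set y := diagQF q (u ∘ Sum.inr) with hydef
    have hxrep : RepresentsQF q x := ⟨_, rfl⟩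
    have hyrep : RepresentsQF q y := ⟨_, rfl⟩
    suffices hmain : QFEquiv K (orthW (smulW c q) (smulW (c * -aN) q))
        (orthW q (smulW (-aN) q)) by
      have h1 : QFEquiv K (smulW c (pfW a)) (smulW c (orthW q (smulW (-aN) q))) :=
        qfe_smul c hdec
      have h2 : smulW c (orthW q (smulW (-aN) q)) = orthW (smulW c q) (smulW (c * -aN) q) := by
        rw [smul_orthW, smul_smulW]
      rw [h2] at h1
      exact qfe_trans (qfe_trans h1 hmain) (qfe_symm hdec)
    by_cases hy0 : y = 0
    · have hxc : x = c := by rw [hy0, mul_zero, add_zero] at hu; exact hu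
      have h1 : QFEquiv K (smulW c q) q := IH (a ∘ Fin.castSucc) ha' c hc (hxc ▸ hxrep)
      refine qfe_orth h1 ?_
      rw [mul_comm c (-aN), ← smul_smulW]
      exact qfe_smul (-aN) h1
    · by_cases hx0 : x = 0
      · have hcy : c = -aN * y := by rw [hx0, zero_add] at hu; exact hu.symm
        have h1 : QFEquiv K (smulW y q) q := IH (a ∘ Fin.castSucc) ha' y hy0 hyrep
        have e1 : QFEquiv K (smulW c q) (smulW (-aN) q) := by
          rw [hcy, ← smul_smulW]; exact qfe_smul _ h1
        have e2 : QFEquiv K (smulW (c * -aN) q) q := by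
          have h : c * -aN = aN ^ 2 * y := by rw [hcy]; ring
          rw [h, ← smul_smulW]
          exact qfe_trans (qfe_smul _ h1) (qfe_sq haN q)
        exact qfe_trans (qfe_orth e1 e2) (orth_comm _ _)
      · have hyne : -aN * y ≠ 0 := mul_ne_zero (neg_ne_zero.mpr haN) hy0
        have hB := qfe_binary hx0 hyne (by rw [hu]; exact hc) q
        rw [hu] at hB
        have hsc : x * (-aN * y) * c = c * -aN * (x * y) := by ring
        rw [hsc] at hB
        have IHx : QFEquiv K (smulW x q) q := IH (a ∘ Fin.castSucc) ha' x hx0 hxrep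
        have IHy : QFEquiv K (smulW y q) q := IH (a ∘ Fin.castSucc) ha' y hy0 hyrep
        have IHxy : QFEquiv K (smulW (x * y) q) q := by
          rw [← smul_smulW]; exact qfe_trans (qfe_smul x IHy) IHx
        have e2' : QFEquiv K (smulW (c * -aN * (x * y)) q) (smulW (c * -aN) q) := by
          rw [← smul_smulW]; exact qfe_smul _ IHxy
        have step1 : QFEquiv K (orthW (smulW c q) (smulW (c * -aN) q))
            (orthW (smulW c q) (smulW (c * -aN * (x * y)) q)) :=
          qfe_orth (qfe_refl _) (qfe_symm e2')
        have step3 : QFEquiv K (orthW (smulW x q) (smulW (-aN * y) q))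
            (orthW q (smulW (-aN) q)) := by
          refine qfe_orth IHx ?_
          rw [← smul_smulW]; exact qfe_smul _ IHy
        exact qfe_trans (qfe_trans step1 (qfe_symm hB)) step3
end

section
/- Let K be a field of characteristic ≠ 2 and let q, q' be quadratic forms over K of the same dimension. If q' is similar to an n-fold Pfister form q (i.e., q' ≅ ⟨λ⟩·q for some λ ∈ Kˣ) and q' represents 1, then q' ≅ q. -/
open scoped BigOperators

section Aux
variable {K : Type} [Field K]

namespace PfAux

lemma diagQF_smul {ι : Type} [Fintype ι] (c : K) (w : ι → K) (v : ι → K) :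
    diagQF (smulW c w) v = c * diagQF w v := by
  simp [diagQF, smulW, Finset.mul_sum, mul_assoc]

lemma diagQF_orth {ι κ : Type} [Fintype ι] [Fintype κ] (w₁ : ι → K) (w₂ : κ → K)
    (v : ι ⊕ κ → K) :
    diagQF (orthW w₁ w₂) v = diagQF w₁ (v ∘ Sum.inl) + diagQF w₂ (v ∘ Sum.inr) := by
  simp [diagQF, orthW, Fintype.sum_sum_type, Function.comp]

lemma qfe_refl {ι : Type} [Fintype ι] (w : ι → K) : QFEquiv K w w :=
  ⟨LinearEquiv.refl K _, fun v => rfl⟩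

lemma qfe_symm {ι κ : Type} [Fintype ι] [Fintype κ] {w : ι → K} {w' : κ → K}
    (h : QFEquiv K w w') : QFEquiv K w' w := by
  obtain ⟨e, he⟩ := h
  exact ⟨e.symm, fun v => by simpa using (he (e.symm v)).symm⟩

lemma qfe_trans {ι κ μ : Type} [Fintype ι] [Fintype κ] [Fintype μ]
    {w : ι → K} {w' : κ → K} {w'' : μ → K}
    (h : QFEquiv K w w') (h' : QFEquiv K w' w'') : QFEquiv K w w'' := by
  obtain ⟨e, he⟩ := h; obtain ⟨e', he'⟩ := h'
  exact ⟨e.trans e', fun v => by simpa using (he' (e v)).trans (he v)⟩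

lemma rep_of_qfe {ι κ : Type} [Fintype ι] [Fintype κ] {w : ι → K} {w' : κ → K}
    (h : QFEquiv K w w') {c : K} (hc : RepresentsQF w c) : RepresentsQF w' c := by
  obtain ⟨e, he⟩ := h; obtain ⟨v, hv⟩ := hc
  exact ⟨e v, by rw [he, hv]⟩

lemma qfe_reindex {ι κ : Type} [Fintype ι] [Fintype κ] (σ : ι ≃ κ) (w : κ → K) :
    QFEquiv K (w ∘ σ) w := by
  refine ⟨(LinearEquiv.funCongrLeft K K σ).symm, fun v => ?_⟩
  have : ∀ k, ((LinearEquiv.funCongrLeft K K σ).symm v) k = v (σ.symm k) := fun k => rfl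
  simp only [diagQF, this]
  exact (Fintype.sum_equiv σ _ _ (fun i => by simp)).symm

lemma qfe_smul {ι κ : Type} [Fintype ι] [Fintype κ] (c : K) {w : ι → K} {w' : κ → K}
    (h : QFEquiv K w w') : QFEquiv K (smulW c w) (smulW c w') := by
  obtain ⟨e, he⟩ := h
  exact ⟨e, fun v => by rw [diagQF_smul, diagQF_smul, he]⟩

lemma smulW_smulW {ι : Type} (c c' : K) (w : ι → K) :
    smulW c (smulW c' w) = smulW (c * c') w := by
  funext i; simp [smulW, mul_assoc]

lemma smulW_orth {ι κ : Type} (c : K) (w₁ : ι → K) (w₂ : κ → K) :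
    smulW c (orthW w₁ w₂) = orthW (smulW c w₁) (smulW c w₂) := by
  funext s; cases s <;> rfl

lemma qfe_sq_smul {ι : Type} [Fintype ι] {s : K} (hs : s ≠ 0) (w : ι → K) :
    QFEquiv K (smulW (s ^ 2) w) w := by
  refine ⟨LinearEquiv.smulOfUnit (Units.mk0 s hs), fun v => ?_⟩
  have : ∀ i, (LinearEquiv.smulOfUnit (M := ι → K) (Units.mk0 s hs) v) i = s * v i :=
    fun i => rfl
  simp only [diagQF, this]
  exact Finset.sum_congr rfl fun i _ => by simp only [smulW]; ring

lemma qfe_orth {ι κ ι' κ' : Type} [Fintype ι] [Fintype κ] [Fintype ι'] [Fintype κ']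
    {w₁ : ι → K} {w₁' : ι' → K} {w₂ : κ → K} {w₂' : κ' → K}
    (h₁ : QFEquiv K w₁ w₁') (h₂ : QFEquiv K w₂ w₂') :
    QFEquiv K (orthW w₁ w₂) (orthW w₁' w₂') := by
  obtain ⟨e₁, he₁⟩ := h₁; obtain ⟨e₂, he₂⟩ := h₂
  refine ⟨((LinearEquiv.sumArrowLequivProdArrow ι κ K K).trans
    ((e₁.prodCongr e₂).trans (LinearEquiv.sumArrowLequivProdArrow ι' κ' K K).symm)), fun v => ?_⟩
  rw [diagQF_orth, diagQF_orth,
    show ((((LinearEquiv.sumArrowLequivProdArrow ι κ K K).trans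
      ((e₁.prodCongr e₂).trans (LinearEquiv.sumArrowLequivProdArrow ι' κ' K K).symm)) v) ∘ Sum.inl)
      = e₁ (v ∘ Sum.inl) from rfl,
    show ((((LinearEquiv.sumArrowLequivProdArrow ι κ K K).trans
      ((e₁.prodCongr e₂).trans (LinearEquiv.sumArrowLequivProdArrow ι' κ' K K).symm)) v) ∘ Sum.inr)
      = e₂ (v ∘ Sum.inr) from rfl, he₁, he₂]

lemma qfe_orth_comm {ι κ : Type} [Fintype ι] [Fintype κ] (w₁ : ι → K) (w₂ : κ → K) :
    QFEquiv K (orthW w₁ w₂) (orthW w₂ w₁) := by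
  have h : orthW w₂ w₁ ∘ (Equiv.sumComm ι κ) = orthW w₁ w₂ := by
    funext s; cases s <;> rfl
  have := qfe_reindex (Equiv.sumComm ι κ) (orthW w₂ w₁)
  rwa [h] at this

end PfAux
end Aux

section Aux2
variable {K : Type} [Field K]
namespace PfAux

/-- A linear map on `K²` given by a 2×2 matrix. -/
def lin2 (α β γ δ : K) : (Fin 2 → K) →ₗ[K] (Fin 2 → K) where
  toFun v := ![α * v 0 + β * v 1, γ * v 0 + δ * v 1]
  map_add' u v := by
    funext i; fin_cases i <;> simp [Matrix.cons_val_zero, Matrix.cons_val_one] <;> ring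
  map_smul' c v := by
    funext i; fin_cases i <;> simp [Matrix.cons_val_zero, Matrix.cons_val_one] <;> ring

lemma lin2_apply (α β γ δ : K) (v : Fin 2 → K) :
    lin2 α β γ δ v = ![α * v 0 + β * v 1, γ * v 0 + δ * v 1] := rfl

/-- Key binary fact: `⟨x+y, xy(x+y)⟩ ≅ ⟨x, y⟩` when `x + y ≠ 0`. -/
lemma qfe_binary (x y : K) (hb : x + y ≠ 0) :
    QFEquiv K ![x + y, x * y * (x + y)] ![x, y] := by
  set b := x + y with hbdef
  have h₁ : lin2 1 y 1 (-x) ∘ₗ lin2 (x / b) (y / b) (1 / b) (-(1 / b)) = LinearMap.id := by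
    apply LinearMap.ext; intro v
    funext i
    simp only [LinearMap.comp_apply, lin2_apply, LinearMap.id_apply]
    fin_cases i <;>
      simp only [Fin.zero_eta, Fin.mk_one, Matrix.cons_val_zero, Matrix.cons_val_one, Matrix.head_cons] <;>
      field_simp <;> ring
  have h₂ : lin2 (x / b) (y / b) (1 / b) (-(1 / b)) ∘ₗ lin2 1 y 1 (-x) = LinearMap.id := by
    apply LinearMap.ext; intro v
    funext i
    simp only [LinearMap.comp_apply, lin2_apply, LinearMap.id_apply]
    fin_cases i <;>
      simp only [Fin.zero_eta, Fin.mk_one, Matrix.cons_val_zero, Matrix.cons_val_one, Matrix.head_cons] <;>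
      field_simp <;> ring
  refine ⟨LinearEquiv.ofLinear (lin2 1 y 1 (-x))
    (lin2 (x / b) (y / b) (1 / b) (-(1 / b))) h₁ h₂, ?_⟩
  intro v
  rw [LinearEquiv.ofLinear_apply, lin2_apply]
  simp [diagQF, Fin.sum_univ_two]
  ring

/-- The standard identification `ι ⊕ ι ≃ ι × Fin 2`. -/
def sumToProd (ι : Type) : ι ⊕ ι ≃ ι × Fin 2 where
  toFun := Sum.elim (fun j => (j, 0)) (fun j => (j, 1))
  invFun x := if x.2 = 0 then Sum.inl x.1 else Sum.inr x.1
  left_inv := by rintro (j | j) <;> simp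
  right_inv := by
    rintro ⟨j, i⟩
    fin_cases i <;> simp

/-- Tensoring an isometry of binary forms with a base form. -/
lemma qfe_tensor_pair {ι : Type} [Fintype ι] (w : ι → K) {p q p' q' : K}
    (h : QFEquiv K ![p, q] ![p', q']) :
    QFEquiv K (orthW (smulW p w) (smulW q w)) (orthW (smulW p' w) (smulW q' w)) := by
  obtain ⟨e, he⟩ := h
  set tw : ι × Fin 2 → K := fun z => ![p, q] z.2 * w z.1 with htw
  set tw' : ι × Fin 2 → K := fun z => ![p', q'] z.2 * w z.1 with htw'
  have hmain : QFEquiv K tw tw' := by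
    refine ⟨(LinearEquiv.curry K K ι (Fin 2)).trans
      ((LinearEquiv.piCongrRight fun _ : ι => e).trans
        (LinearEquiv.curry K K ι (Fin 2)).symm), fun v => ?_⟩
    have hE : ∀ z : ι × Fin 2, ((LinearEquiv.curry K K ι (Fin 2)).trans
      ((LinearEquiv.piCongrRight fun _ : ι => e).trans
        (LinearEquiv.curry K K ι (Fin 2)).symm)) v z
        = e (fun i => v (z.1, i)) z.2 := fun z => rfl
    simp only [diagQF, hE]
    rw [Fintype.sum_prod_type, Fintype.sum_prod_type]
    refine Finset.sum_congr rfl fun j _ => ?_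
    have h1 : ∑ i : Fin 2, tw' (j, i) * (e (fun i' => v (j, i')) i) ^ 2
        = w j * diagQF ![p', q'] (e (fun i' => v (j, i'))) := by
      simp only [diagQF, htw', Finset.mul_sum]
      exact Finset.sum_congr rfl fun i _ => by ring
    have h2 : ∑ i : Fin 2, tw (j, i) * (v (j, i)) ^ 2
        = w j * diagQF ![p, q] (fun i' => v (j, i')) := by
      simp only [diagQF, htw, Finset.mul_sum]
      exact Finset.sum_congr rfl fun i _ => by ring
    rw [h1, h2, he]
  have hl : tw ∘ (sumToProd ι) = orthW (smulW p w) (smulW q w) := by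
    funext s; cases s <;> simp [htw, sumToProd, orthW, smulW, mul_comm]
  have hr : tw' ∘ (sumToProd ι) = orthW (smulW p' w) (smulW q' w) := by
    funext s; cases s <;> simp [htw', sumToProd, orthW, smulW, mul_comm]
  have hlq := qfe_reindex (sumToProd ι) tw
  have hrq := qfe_reindex (sumToProd ι) tw'
  rw [hl] at hlq; rw [hr] at hrq
  exact qfe_trans (qfe_trans hlq hmain) (qfe_symm hrq)

end PfAux
end Aux2

section Aux3
variable {K : Type} [Field K]
namespace PfAux

/-- `(Fin n → Fin 2) ⊕ (Fin n → Fin 2) ≃ (Fin (n+1) → Fin 2)`, splitting on the value at 0. -/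
def splitEquiv (n : ℕ) : ((Fin n → Fin 2) ⊕ (Fin n → Fin 2)) ≃ (Fin (n + 1) → Fin 2) :=
  (sumToProd _).trans
    { toFun := fun x => Fin.cons x.2 x.1
      invFun := fun f => (f ∘ Fin.succ, f 0)
      left_inv := by
        rintro ⟨g, i⟩
        refine Prod.ext ?_ ?_
        · funext j; simp [Fin.cons_succ]
        · simp
      right_inv := fun f => Fin.cons_self_tail f }

lemma pfW_split {n : ℕ} (a : Fin (n + 1) → K) :
    pfW a ∘ (splitEquiv n) =
      orthW (pfW (a ∘ Fin.succ)) (smulW (-a 0) (pfW (a ∘ Fin.succ))) := by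
  funext s
  cases s with
  | inl g =>
      show pfW a (Fin.cons 0 g) = pfW (a ∘ Fin.succ) g
      simp [pfW, Fin.prod_univ_succ, Fin.cons_zero, Fin.cons_succ]
  | inr g =>
      show pfW a (Fin.cons 1 g) = smulW (-a 0) (pfW (a ∘ Fin.succ)) g
      simp [pfW, smulW, Fin.prod_univ_succ, Fin.cons_zero, Fin.cons_succ]

lemma smulW_one {ι : Type} (w : ι → K) : smulW (1 : K) w = w := by
  funext i; simp [smulW]

/-- Roundness of Pfister forms: a nonzero represented value `b` gives `b·q ≅ q`. -/
lemma pf_round : ∀ (n : ℕ) (a : Fin n → K) (b : K), b ≠ 0 →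
    RepresentsQF (pfW a) b → QFEquiv K (smulW b (pfW a)) (pfW a) := by
  intro n
  induction n with
  | zero =>
      intro a b hb hrep
      obtain ⟨v, hv⟩ := hrep
      have hpf : pfW a = fun _ => (1 : K) := funext fun f => by simp [pfW]
      have hb2 : b = (v default) ^ 2 := by
        rw [← hv]; simp [diagQF, hpf, Fintype.sum_unique]
        exact congrArg (· ^ 2) (congrArg v (Subsingleton.elim _ _))
      have hs : v default ≠ 0 := by
        intro h; apply hb; rw [hb2, h]; ring
      rw [hb2]; exact qfe_sq_smul hs _
  | succ n ih =>
      intro a b hb hrep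
      set a' : Fin n → K := a ∘ Fin.succ with ha'
      set q : (Fin n → Fin 2) → K := pfW a' with hq
      set A := a 0 with hA
      have hsplit : QFEquiv K (orthW q (smulW (-A) q)) (pfW a) := by
        have h := qfe_reindex (splitEquiv n) (pfW a)
        rwa [pfW_split] at h
      have hrepψ : RepresentsQF (orthW q (smulW (-A) q)) b :=
        rep_of_qfe (qfe_symm hsplit) hrep
      obtain ⟨v, hv⟩ := hrepψ
      set x := diagQF q (v ∘ Sum.inl) with hxdef
      set y := diagQF q (v ∘ Sum.inr) with hydef
      have hxy : b = x + -A * y := by rw [← hv, diagQF_orth, diagQF_smul]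
      have hrx : RepresentsQF q x := ⟨_, rfl⟩
      have hry : RepresentsQF q y := ⟨_, rfl⟩
      suffices hψ : QFEquiv K (orthW (smulW b q) (smulW (b * -A) q)) (orthW q (smulW (-A) q)) by
        have h1 : QFEquiv K (smulW b (pfW a)) (smulW b (orthW q (smulW (-A) q))) :=
          qfe_smul b (qfe_symm hsplit)
        rw [smulW_orth, smulW_smulW] at h1
        exact qfe_trans (qfe_trans h1 hψ) hsplit
      by_cases hy : y = 0
      · have hbx : b = x := by rw [hxy, hy]; ring
        have h1 : QFEquiv K (smulW b q) q := ih a' b hb (hbx ▸ hrx)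
        have h2 : QFEquiv K (smulW (b * -A) q) (smulW (-A) q) := by
          rw [show b * -A = -A * b by ring, ← smulW_smulW]
          exact qfe_smul _ h1
        exact qfe_orth h1 h2
      by_cases hx : x = 0
      · have hb2 : b = -A * y := by rw [hxy, hx]; ring
        have hAne : A ≠ 0 := by
          intro h; apply hb; rw [hb2, h]; ring
        have hy' : QFEquiv K (smulW y q) q := ih a' y hy hry
        have h1 : QFEquiv K (smulW b q) (smulW (-A) q) := by
          rw [hb2, ← smulW_smulW]
          exact qfe_smul _ hy'
        have h2 : QFEquiv K (smulW (b * -A) q) q := by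
          rw [show b * -A = A ^ 2 * y by rw [hb2]; ring, ← smulW_smulW]
          exact qfe_trans (qfe_smul _ hy') (qfe_sq_smul hAne q)
        exact qfe_trans (qfe_orth h1 h2) (qfe_orth_comm _ _)
      · -- x ≠ 0 and y ≠ 0
        have hx' : QFEquiv K (smulW x q) q := ih a' x hx hrx
        have hy' : QFEquiv K (smulW y q) q := ih a' y hy hry
        set y' := -A * y with hy'def
        have hb' : b = x + y' := hxy
        subst hb'
        have hBne : x + y' ≠ 0 := hb
        have hbin := qfe_binary x y' hBne
        have htensor := qfe_tensor_pair q hbin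
        have hxyq : QFEquiv K (smulW (x * y' * (x + y')) q) (smulW ((x + y') * -A) q) := by
          rw [show x * y' * (x + y') = ((x + y') * -A) * (x * y) by rw [hy'def]; ring,
            ← smulW_smulW, ← smulW_smulW x y q]
          exact qfe_smul _ (qfe_trans (qfe_smul _ hy') hx')
        have hyy' : QFEquiv K (smulW y' q) (smulW (-A) q) := by
          rw [hy'def, ← smulW_smulW]
          exact qfe_smul _ hy'
        exact qfe_trans (qfe_orth (qfe_refl _) (qfe_symm hxyq))
          (qfe_trans htensor (qfe_orth hx' hyy'))

end PfAux
end Aux3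


/-- a quadratic form of the same dimension as an n-fold Pfister form `q`
which is similar to `q` and represents `1` is isometric to `q`. -/
theorem stmt_6 {K : Type} [Field K] (hchar : (2 : K) ≠ 0)
    {n : ℕ} (a : Fin n → K) (ha : ∀ i, a i ≠ 0)
    {ι : Type} [Fintype ι] (d : ι → K) (hd : ∀ i, d i ≠ 0)
    (hdim : Fintype.card ι = 2 ^ n)
    (hsim : ∃ c : K, c ≠ 0 ∧ QFEquiv K d (smulW c (pfW a)))
    (hone : RepresentsQF d 1) :
    QFEquiv K d (pfW a) := by
  obtain ⟨c, hc, hdc⟩ := hsim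
  have h1 : RepresentsQF (smulW c (pfW a)) 1 := PfAux.rep_of_qfe hdc hone
  obtain ⟨v, hv⟩ := h1
  rw [PfAux.diagQF_smul] at hv
  have hv' : diagQF (pfW a) v = c⁻¹ := by
    field_simp
    linear_combination hv
  have hround := PfAux.pf_round n a c⁻¹ (inv_ne_zero hc) ⟨v, hv'⟩
  have h2 : QFEquiv K (smulW c (smulW c⁻¹ (pfW a))) (smulW c (pfW a)) :=
    PfAux.qfe_smul c hround
  rw [PfAux.smulW_smulW, mul_inv_cancel₀ hc, PfAux.smulW_one] at h2
  exact PfAux.qfe_trans hdc (PfAux.qfe_symm h2)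
end

section
/- Let K be a field of characteristic ≠ 2 with elements a, b, c and X, Y satisfying X² − aY² + ab = 0 and b+c² ≠ 0, b+1 ≠ 0. Set c' = 1 − (b+1)c/(b+c²). Then the 2-fold Pfister form ⟨⟨a, (b+1)(b+c²)⟩⟩ over K represents −2aYc'. (The identity: X² − a(Y+1)² plus −(b+1)(b+c²)[(X/(b+c²))² − a((Y+c)/(b+c²))²] equals −2aYc'.) -/
open scoped BigOperators

/-- with `X² − aY² + ab = 0`, `b+c² ≠ 0`, `b+1 ≠ 0` and
`c' = 1 − (b+1)c/(b+c²)`, the Pfister form `⟨⟨a,(b+1)(b+c²)⟩⟩` represents `−2aYc'`,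
via the stated identity. -/
theorem stmt_11 {K : Type} [Field K] (hchar : (2 : K) ≠ 0)
    (a b c X Y : K) (hrel : X ^ 2 - a * Y ^ 2 + a * b = 0)
    (hbc : b + c ^ 2 ≠ 0) (hb1 : b + 1 ≠ 0) :
    (X ^ 2 - a * (Y + 1) ^ 2)
        + (-((b + 1) * (b + c ^ 2))) *
          ((X / (b + c ^ 2)) ^ 2 - a * ((Y + c) / (b + c ^ 2)) ^ 2)
        = -(2 * a * Y * (1 - (b + 1) * c / (b + c ^ 2))) ∧
    RepresentsQF (pf2 a ((b + 1) * (b + c ^ 2)))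
      (-(2 * a * Y * (1 - (b + 1) * c / (b + c ^ 2)))) := by
  have hid : (X ^ 2 - a * (Y + 1) ^ 2)
        + (-((b + 1) * (b + c ^ 2))) *
          ((X / (b + c ^ 2)) ^ 2 - a * ((Y + c) / (b + c ^ 2)) ^ 2)
        = -(2 * a * Y * (1 - (b + 1) * c / (b + c ^ 2))) := by
    have h2 : (b + c ^ 2) ≠ 0 := hbc
    field_simp
    linear_combination (c ^ 2 - 1) * hrel
  refine ⟨hid, ?_⟩
  refine ⟨fun p => if p.1 = 0 then (if p.2 = 0 then X else X / (b + c ^ 2))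
    else (if p.2 = 0 then Y + 1 else (Y + c) / (b + c ^ 2)), ?_⟩
  rw [← hid]
  simp [diagQF, pf2, tensorW, pf1, Fintype.sum_prod_type, Fin.sum_univ_two]
  ring
end
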